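/- arXiv:1307.2641 — 4 statements merged into one kernel-verified Lean document; each statement's English description precedes it below -/
import Mathlib

section
/- Let Q₁ be a symmetric n×n matrix, Q₂ a symmetric m×m matrix, x ∈ ℝⁿ with [[1,xᵀ],[x,Q₁]] ⪰ 0, y ∈ ℝᵐ with [[1,yᵀ],[y,Q₂]] ⪰ 0, and let λ₁, λ₂ > 0 with λ₁ + λ₂ = 1. Then the stacked vector z = (x,y) ∈ ℝ^{n+m} satisfies [[1,zᵀ],[z,Q]] ⪰ 0 where Q is the block-diagonal matrix diag(Q₁/λ₁, Q₂/λ₂). -/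
open Matrix

def inEllipsoidQ {ι : Type*} [Fintype ι] (Q : Matrix ι ι ℝ) (x : ι → ℝ) : Prop :=
  (Matrix.fromBlocks (1 : Matrix Unit Unit ℝ)
      (Matrix.of fun _ j => x j) (Matrix.of fun i _ => x i) Q).PosSemidef

private lemma quadA {k : ℕ} (Q : Matrix (Fin k) (Fin k) ℝ) (z u : Fin k → ℝ) (s : ℝ) :
    ∑ i, u i * (z i * s + ∑ j, Q i j * u j)
      = s * (∑ i, z i * u i) + ∑ i, u i * ∑ j, Q i j * u j := by
  rw [Finset.mul_sum, ← Finset.sum_add_distrib]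
  exact Finset.sum_congr rfl fun i _ => by ring

private lemma quadB {k : ℕ} (Q : Matrix (Fin k) (Fin k) ℝ) (z u : Fin k → ℝ) (s c : ℝ) :
    ∑ i, u i * (z i * s + ∑ j, c * Q i j * u j)
      = s * (∑ i, z i * u i) + c * ∑ i, u i * ∑ j, Q i j * u j := by
  rw [Finset.mul_sum, Finset.mul_sum, ← Finset.sum_add_distrib]
  refine Finset.sum_congr rfl fun i _ => ?_
  have h : ∑ j, c * Q i j * u j = c * ∑ j, Q i j * u j := by
    rw [Finset.mul_sum]; exact Finset.sum_congr rfl fun j _ => by ring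
  rw [h]; ring


theorem stmt_1 {n m : ℕ} (Q₁ : Matrix (Fin n) (Fin n) ℝ) (Q₂ : Matrix (Fin m) (Fin m) ℝ)
    (hQ₁ : Q₁.IsSymm) (hQ₂ : Q₂.IsSymm)
    (x : Fin n → ℝ) (y : Fin m → ℝ)
    (hx : inEllipsoidQ Q₁ x) (hy : inEllipsoidQ Q₂ y)
    (l₁ l₂ : ℝ) (hl₁ : 0 < l₁) (hl₂ : 0 < l₂) (hsum : l₁ + l₂ = 1) :
    inEllipsoidQ (Matrix.fromBlocks (l₁⁻¹ • Q₁) 0 0 (l₂⁻¹ • Q₂)) (Sum.elim x y) := by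
  unfold inEllipsoidQ at hx hy ⊢
  rw [Matrix.posSemidef_iff_dotProduct_mulVec] at hx hy ⊢
  constructor
  · unfold Matrix.IsHermitian
    ext i j
    rcases i with i | (i | i) <;> rcases j with j | (j | j) <;>
      simp [Matrix.conjTranspose_apply, Matrix.fromBlocks, hQ₁.apply, hQ₂.apply]
  · intro v
    set a := v (Sum.inl ()) with ha
    set u := fun i => v (Sum.inr (Sum.inl i)) with hu
    set w := fun j => v (Sum.inr (Sum.inr j)) with hw
    have h1 := hx.2 (Sum.elim (fun _ => l₁ * a) u)
    have h2 := hy.2 (Sum.elim (fun _ => l₂ * a) w)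
    simp [dotProduct, Matrix.mulVec, Fintype.sum_sum_type, Matrix.fromBlocks] at h1 h2 ⊢
    rw [quadA Q₁ x u (l₁ * a)] at h1
    rw [quadA Q₂ y w (l₂ * a)] at h2
    rw [quadB Q₁ x u a l₁⁻¹, quadB Q₂ y w a l₂⁻¹]
    set S1 := ∑ i, x i * u i
    set S2 := ∑ i, y i * w i
    set T1 := ∑ i, u i * ∑ j, Q₁ i j * u j with hT1
    set T2 := ∑ i, w i * ∑ j, Q₂ i j * w j with hT2
    have h1' : 0 ≤ l₁ * (a * a) + 2 * (a * S1) + l₁⁻¹ * T1 := by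
      have h := mul_nonneg (inv_nonneg.2 hl₁.le) h1
      have e : l₁⁻¹ * (l₁ * a * (l₁ * a + S1) + (l₁ * a * S1 + T1))
          = l₁ * (a * a) + 2 * (a * S1) + l₁⁻¹ * T1 := by
        field_simp; ring
      linarith [e ▸ h]
    have h2' : 0 ≤ l₂ * (a * a) + 2 * (a * S2) + l₂⁻¹ * T2 := by
      have h := mul_nonneg (inv_nonneg.2 hl₂.le) h2
      have e : l₂⁻¹ * (l₂ * a * (l₂ * a + S2) + (l₂ * a * S2 + T2))
          = l₂ * (a * a) + 2 * (a * S2) + l₂⁻¹ * T2 := by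
        field_simp; ring
      linarith [e ▸ h]
    have hs : l₁ * (a * a) + l₂ * (a * a) = a * a := by
      rw [← add_mul, hsum, one_mul]
    nlinarith [h1', h2', hs]
end

section
/- Suppose P ∈ ℝ^{n×n} is symmetric positive definite, 0 < α, and the block matrix [[AᵀPA − (1−α)P, AᵀPB],[BᵀPA, BᵀPB − αI_m]] is negative semidefinite. Then for all x ∈ ℝⁿ and y ∈ ℝᵐ with xᵀPx ≤ 1 and yᵀy ≤ 1, the successor state x₊ = Ax + By satisfies x₊ᵀ P x₊ ≤ 1. -/
open Matrix

theorem stmt_3 {n m : ℕ} (P : Matrix (Fin n) (Fin n) ℝ) (hP : P.PosDef)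
    (A : Matrix (Fin n) (Fin n) ℝ) (B : Matrix (Fin n) (Fin m) ℝ)
    (α : ℝ) (hα : 0 < α)
    (hLMI : (-(Matrix.fromBlocks (Aᵀ * P * A - (1 - α) • P) (Aᵀ * P * B)
        (Bᵀ * P * A) (Bᵀ * P * B - α • (1 : Matrix (Fin m) (Fin m) ℝ)))).PosSemidef) :
    ∀ (x : Fin n → ℝ) (y : Fin m → ℝ),
      x ⬝ᵥ (P *ᵥ x) ≤ 1 → y ⬝ᵥ y ≤ 1 →
      (A *ᵥ x + B *ᵥ y) ⬝ᵥ (P *ᵥ (A *ᵥ x + B *ᵥ y)) ≤ 1 := by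
  intro x y hx hy
  have key : ∀ (u : Fin n → ℝ) (v : Fin m → ℝ),
      (A *ᵥ u + B *ᵥ v) ⬝ᵥ (P *ᵥ (A *ᵥ u + B *ᵥ v)) ≤ (1 - α) * (u ⬝ᵥ (P *ᵥ u)) + α * (v ⬝ᵥ v) := by
    intro u v
    have h := hLMI.dotProduct_mulVec_nonneg (Sum.elim u v)
    simp only [RCLike.re_to_real, star_trivial, neg_mulVec, dotProduct_neg,
      fromBlocks_mulVec, Sum.elim_comp_inl, Sum.elim_comp_inr,
      sumElim_dotProduct_sumElim, sub_mulVec, smul_mulVec,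
      dotProduct_add, dotProduct_sub, dotProduct_smul, smul_eq_mul,
      Matrix.mul_assoc, ← mulVec_mulVec, one_mulVec] at h
    have e1 : ∀ w : Fin n → ℝ, u ⬝ᵥ (Aᵀ *ᵥ w) = (A *ᵥ u) ⬝ᵥ w := by
      intro w; rw [dotProduct_mulVec, vecMul_transpose]
    have e2 : ∀ w : Fin n → ℝ, v ⬝ᵥ (Bᵀ *ᵥ w) = (B *ᵥ v) ⬝ᵥ w := by
      intro w; rw [dotProduct_mulVec, vecMul_transpose]
    simp only [e1, e2] at h
    have expand : (A *ᵥ u + B *ᵥ v) ⬝ᵥ (P *ᵥ (A *ᵥ u + B *ᵥ v)) =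
        (A *ᵥ u) ⬝ᵥ (P *ᵥ (A *ᵥ u)) + (A *ᵥ u) ⬝ᵥ (P *ᵥ (B *ᵥ v))
        + ((B *ᵥ v) ⬝ᵥ (P *ᵥ (A *ᵥ u)) + (B *ᵥ v) ⬝ᵥ (P *ᵥ (B *ᵥ v))) := by
      simp only [mulVec_add, dotProduct_add, add_dotProduct, ← mulVec_mulVec]
      ring
    rw [expand]
    linarith
  have hα1 : n = 0 ∨ α ≤ 1 := by
    rcases Nat.eq_zero_or_pos n with h | h
    · exact Or.inl h
    · right
      by_contra hc
      push_neg at hc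
      set u : Fin n → ℝ := Pi.single ⟨0, h⟩ 1 with hu
      have hune : u ≠ 0 := by
        intro h0
        have := congrFun h0 ⟨0, h⟩
        simp [hu] at this
      have h1 : 0 ≤ (A *ᵥ u) ⬝ᵥ (P *ᵥ (A *ᵥ u)) := hP.posSemidef.dotProduct_mulVec_nonneg (A *ᵥ u)
      have h2 : 0 < u ⬝ᵥ (P *ᵥ u) := hP.dotProduct_mulVec_pos hune
      have h3 := key u 0
      simp only [mulVec_zero, add_zero, dotProduct_zero, mul_zero] at h3
      nlinarith
  have hx0 : 0 ≤ x ⬝ᵥ (P *ᵥ x) := hP.posSemidef.dotProduct_mulVec_nonneg x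
  have hy0 : 0 ≤ y ⬝ᵥ y := Finset.sum_nonneg fun i _ => mul_self_nonneg (y i)
  have h := key x y
  rcases hα1 with hn | hle
  · subst hn
    simp [dotProduct]
  · nlinarith
end

section
/- Under the same LMI hypothesis (P ≻ 0, α > 0, [[AᵀPA − (1−α)P, AᵀPB],[BᵀPA, BᵀPB − αI]] ⪯ 0), for any initial state x(0) with x(0)ᵀPx(0) ≤ 1 and any input sequence y(k) with y(k)ᵀy(k) ≤ 1 for all k, every state x(k) of the system x(k+1) = A x(k) + B y(k) satisfies x(k)ᵀ P x(k) ≤ 1. -/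
open Matrix

set_option maxRecDepth 4000 in
lemma key {n m : ℕ} (P : Matrix (Fin n) (Fin n) ℝ) (hP : P.PosDef)
    (A : Matrix (Fin n) (Fin n) ℝ) (B : Matrix (Fin n) (Fin m) ℝ) (α : ℝ)
    (hLMI : (-(Matrix.fromBlocks (Aᵀ * P * A - (1 - α) • P) (Aᵀ * P * B)
        (Bᵀ * P * A) (Bᵀ * P * B - α • (1 : Matrix (Fin m) (Fin m) ℝ)))).PosSemidef)
    (u : Fin n → ℝ) (v : Fin m → ℝ) :
    (A *ᵥ u + B *ᵥ v) ⬝ᵥ (P *ᵥ (A *ᵥ u + B *ᵥ v)) ≤ (1 - α) * (u ⬝ᵥ (P *ᵥ u)) + α * (v ⬝ᵥ v) := by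
  have h := by simpa only [star_trivial] using hLMI.dotProduct_mulVec_nonneg (Sum.elim u v)
  have htr : ∀ (w : Fin n → ℝ), u ⬝ᵥ (Aᵀ *ᵥ w) = (A *ᵥ u) ⬝ᵥ w := by
    intro w; rw [dotProduct_mulVec, vecMul_transpose]
  have htr2 : ∀ (w : Fin n → ℝ), v ⬝ᵥ (Bᵀ *ᵥ w) = (B *ᵥ v) ⬝ᵥ w := by
    intro w; rw [dotProduct_mulVec, vecMul_transpose]
  simp only [star_trivial, Sum.elim_comp_inl, Sum.elim_comp_inr, neg_mulVec, dotProduct_neg,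
    fromBlocks_mulVec, sub_mulVec, smul_mulVec,
    ← mulVec_mulVec, sumElim_dotProduct_sumElim, dotProduct_add, dotProduct_sub, add_dotProduct,
    dotProduct_smul, htr, htr2, one_mulVec, smul_eq_mul, mulVec_add, neg_sub, neg_add] at h ⊢
  have hPt : Pᵀ = P := by
    have := hP.isHermitian.eq
    rwa [conjTranspose_eq_transpose_of_trivial] at this
  have hsym : (B *ᵥ v) ⬝ᵥ (P *ᵥ (A *ᵥ u)) = (A *ᵥ u) ⬝ᵥ (P *ᵥ (B *ᵥ v)) := by
    conv_lhs => rw [dotProduct_mulVec, ← hPt, vecMul_transpose, dotProduct_comm]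
  linarith

theorem stmt_4 {n m : ℕ} (P : Matrix (Fin n) (Fin n) ℝ) (hP : P.PosDef)
    (A : Matrix (Fin n) (Fin n) ℝ) (B : Matrix (Fin n) (Fin m) ℝ)
    (α : ℝ) (hα : 0 < α)
    (hLMI : (-(Matrix.fromBlocks (Aᵀ * P * A - (1 - α) • P) (Aᵀ * P * B)
        (Bᵀ * P * A) (Bᵀ * P * B - α • (1 : Matrix (Fin m) (Fin m) ℝ)))).PosSemidef)
    (x : ℕ → Fin n → ℝ) (y : ℕ → Fin m → ℝ)
    (hrec : ∀ k, x (k + 1) = A *ᵥ x k + B *ᵥ y k)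
    (hx0 : x 0 ⬝ᵥ (P *ᵥ x 0) ≤ 1)
    (hy : ∀ k, y k ⬝ᵥ y k ≤ 1) :
    ∀ k, x k ⬝ᵥ (P *ᵥ x k) ≤ 1 := by
  rcases Nat.eq_zero_or_pos n with hn | hn
  · subst hn
    intro k
    simp [dotProduct]
  · -- first show 1 - α ≥ 0
    set e : Fin n → ℝ := fun _ => 1 with he
    have hene : e ≠ 0 := by
      intro h
      have := congrFun h ⟨0, hn⟩
      simp [he] at this
    have hpos : 0 < e ⬝ᵥ (P *ᵥ e) := by simpa only [star_trivial] using hP.dotProduct_mulVec_pos hene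
    have hk := key P hP A B α hLMI e 0
    simp only [mulVec_zero, add_zero, dotProduct_zero, mul_zero] at hk
    have hAe : 0 ≤ (A *ᵥ e) ⬝ᵥ (P *ᵥ (A *ᵥ e)) := by simpa only [star_trivial] using hP.posSemidef.dotProduct_mulVec_nonneg (A *ᵥ e)
    have h1α : 0 ≤ 1 - α := by nlinarith
    intro k
    induction k with
    | zero => exact hx0
    | succ k ih =>
        have hs : 0 ≤ x k ⬝ᵥ (P *ᵥ x k) := by simpa only [star_trivial] using hP.posSemidef.dotProduct_mulVec_nonneg (x k)
        have ht : 0 ≤ y k ⬝ᵥ y k := Finset.sum_nonneg fun i _ => mul_self_nonneg _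
        have hk2 := key P hP A B α hLMI (x k) (y k)
        rw [hrec k]
        nlinarith [hy k]
end

section
/- Let Q₁, ..., Q_N be symmetric positive semidefinite matrices of sizes n₁, ..., n_N, let x_i ∈ ℝ^{n_i} satisfy [[1, x_iᵀ],[x_i, Q_i]] ⪰ 0 for each i, and let μ₁, ..., μ_N > 0 with Σ μ_i = 1. Then the concatenated vector z = (x₁, ..., x_N) satisfies [[1, zᵀ],[z, Q]] ⪰ 0 where Q is block-diagonal with blocks Q_i / μ_i. -/
open Matrix

lemma blockDiag'_mulVec {N : ℕ} {n : Fin N → ℕ}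
    (M : ∀ i, Matrix (Fin (n i)) (Fin (n i)) ℝ) (v : (Σ i, Fin (n i)) → ℝ)
    (p : Σ i, Fin (n i)) :
    (blockDiagonal' M *ᵥ v) p = (M p.1 *ᵥ fun j => v ⟨p.1, j⟩) p.2 := by
  obtain ⟨i, j⟩ := p
  simp only [mulVec, dotProduct]
  rw [← Finset.univ_sigma_univ, Finset.sum_sigma]
  rw [Finset.sum_eq_single i]
  · simp
  · intro k _ hk
    apply Finset.sum_eq_zero
    intro l _
    rw [blockDiagonal'_apply_ne _ _ _ (Ne.symm hk), zero_mul]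
  · simp

lemma blockDiag'_quad {N : ℕ} {n : Fin N → ℕ}
    (M : ∀ i, Matrix (Fin (n i)) (Fin (n i)) ℝ) (v : (Σ i, Fin (n i)) → ℝ) :
    v ⬝ᵥ (blockDiagonal' M *ᵥ v) =
      ∑ i, (fun j => v ⟨i, j⟩) ⬝ᵥ (M i *ᵥ fun j => v ⟨i, j⟩) := by
  simp only [dotProduct]
  rw [← Finset.univ_sigma_univ, Finset.sum_sigma]
  congr 1; ext i; congr 1; ext j
  rw [blockDiag'_mulVec]

lemma ell_quad {ι : Type*} [Fintype ι] {Q : Matrix ι ι ℝ} {x : ι → ℝ}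
    (h : inEllipsoidQ Q x) (t : ℝ) (u : ι → ℝ) :
    0 ≤ t ^ 2 + 2 * t * (x ⬝ᵥ u) + u ⬝ᵥ (Q *ᵥ u) := by
  have := h.dotProduct_mulVec_nonneg (Sum.elim (fun _ => t) u)
  rw [fromBlocks_mulVec] at this
  simp only [star_trivial, sumElim_dotProduct_sumElim, RCLike.re_to_real] at this
  simp only [Sum.elim_comp_inl, Sum.elim_comp_inr, dotProduct_add, one_mulVec] at this
  have hB : (Matrix.of fun _ j => x j) *ᵥ u = fun _ : Unit => x ⬝ᵥ u := rfl
  have hC : ((Matrix.of fun i (_ : Unit) => x i) *ᵥ fun _ => t) = fun i => x i * t := by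
    funext i; simp [mulVec, dotProduct]
  rw [hB, hC] at this
  have h1 : ((fun _ : Unit => t) ⬝ᵥ fun _ => t) = t * t := by simp [dotProduct]
  have h2 : ((fun _ : Unit => t) ⬝ᵥ fun _ : Unit => x ⬝ᵥ u) = t * (x ⬝ᵥ u) := by
    simp [dotProduct]
  have h3 : (u ⬝ᵥ fun i => x i * t) = t * (x ⬝ᵥ u) := by
    simp only [dotProduct, Finset.mul_sum]; exact Finset.sum_congr rfl fun i _ => by ring
  rw [h1, h2, h3] at this
  nlinarith [this]

theorem stmt_17 {N : ℕ} (n : Fin N → ℕ)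
    (Q : ∀ i, Matrix (Fin (n i)) (Fin (n i)) ℝ)
    (hQsym : ∀ i, (Q i).IsSymm) (hQ : ∀ i, (Q i).PosSemidef)
    (x : ∀ i, Fin (n i) → ℝ) (hx : ∀ i, inEllipsoidQ (Q i) (x i))
    (μ : Fin N → ℝ) (hμ : ∀ i, 0 < μ i) (hsum : ∑ i, μ i = 1) :
    inEllipsoidQ (Matrix.blockDiagonal' fun i => (μ i)⁻¹ • Q i)
      (fun p : Σ i, Fin (n i) => x p.1 p.2) := by
  refine posSemidef_iff_dotProduct_mulVec.mpr ⟨?_, ?_⟩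
  · -- Hermitian
    rw [isHermitian_fromBlocks_iff]
    refine ⟨?_, rfl, ?_, ?_⟩
    · ext ⟨⟩ ⟨⟩; simp [Matrix.one_apply]
    · ext ⟨⟩ p; simp
    · unfold Matrix.IsHermitian
      rw [blockDiagonal'_conjTranspose]
      have e : (fun k => ((μ k)⁻¹ • Q k)ᴴ) = fun i => (μ i)⁻¹ • Q i := by
        funext k
        rw [conjTranspose_smul, star_trivial, (hQ k).1]
      rw [e]
  · intro w
    set t := w (Sum.inl ()) with ht
    set v : (Σ i, Fin (n i)) → ℝ := fun p => w (Sum.inr p) with hv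
    have hw : w = Sum.elim (fun _ => t) v := by
      funext s; cases s with
      | inl u => cases u; rfl
      | inr p => rfl
    rw [hw, fromBlocks_mulVec]
    simp only [star_trivial, sumElim_dotProduct_sumElim, RCLike.re_to_real,
      Sum.elim_comp_inl, Sum.elim_comp_inr, dotProduct_add, one_mulVec]
    have hB : ((Matrix.of fun _ j => x j.1 j.2) *ᵥ v) =
        fun _ : Unit => (fun p : Σ i, Fin (n i) => x p.1 p.2) ⬝ᵥ v := rfl
    have hC : ((Matrix.of fun p (_ : Unit) => x p.1 p.2) *ᵥ fun _ => t) =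
        fun p : Σ i, Fin (n i) => x p.1 p.2 * t := by
      funext p; simp [mulVec, dotProduct]
    rw [hB, hC]
    have h1 : ((fun _ : Unit => t) ⬝ᵥ fun _ => t) = t * t := by simp [dotProduct]
    have h2 : ((fun _ : Unit => t) ⬝ᵥ fun _ : Unit =>
        (fun p : Σ i, Fin (n i) => x p.1 p.2) ⬝ᵥ v) =
        t * ((fun p : Σ i, Fin (n i) => x p.1 p.2) ⬝ᵥ v) := by simp [dotProduct]
    have h3 : (v ⬝ᵥ fun p : Σ i, Fin (n i) => x p.1 p.2 * t) =
        t * ((fun p : Σ i, Fin (n i) => x p.1 p.2) ⬝ᵥ v) := by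
      simp only [dotProduct, Finset.mul_sum]
      exact Finset.sum_congr rfl fun p _ => by ring
    rw [h1, h2, h3, blockDiag'_quad]
    -- key estimates
    have hdv : ((fun p : Σ i, Fin (n i) => x p.1 p.2) ⬝ᵥ v) =
        ∑ i, (x i ⬝ᵥ fun j => v ⟨i, j⟩) := by
      simp only [dotProduct]
      rw [← Finset.univ_sigma_univ, Finset.sum_sigma]
    have key : ∀ i, 0 ≤ μ i * t ^ 2 + 2 * t * (x i ⬝ᵥ fun j => v ⟨i, j⟩)
        + ((fun j => v ⟨i, j⟩) ⬝ᵥ (((μ i)⁻¹ • Q i) *ᵥ fun j => v ⟨i, j⟩)) := by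
      intro i
      have h := ell_quad (hx i) (μ i * t) (fun j => v ⟨i, j⟩)
      have hpos := (hμ i)
      have := mul_nonneg (le_of_lt (inv_pos.mpr hpos)) h
      have hsmul : ((fun j => v ⟨i, j⟩) ⬝ᵥ (((μ i)⁻¹ • Q i) *ᵥ fun j => v ⟨i, j⟩)) =
          (μ i)⁻¹ * ((fun j => v ⟨i, j⟩) ⬝ᵥ (Q i *ᵥ fun j => v ⟨i, j⟩)) := by
        rw [smul_mulVec, dotProduct_smul]; rfl
      rw [hsmul]
      have hinv : (μ i)⁻¹ * (μ i * t) ^ 2 = μ i * t ^ 2 := by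
        field_simp
      calc 0 ≤ (μ i)⁻¹ * ((μ i * t) ^ 2 + 2 * (μ i * t) * (x i ⬝ᵥ fun j => v ⟨i, j⟩)
              + ((fun j => v ⟨i, j⟩) ⬝ᵥ (Q i *ᵥ fun j => v ⟨i, j⟩))) := this
        _ = μ i * t ^ 2 + 2 * t * (x i ⬝ᵥ fun j => v ⟨i, j⟩)
              + (μ i)⁻¹ * ((fun j => v ⟨i, j⟩) ⬝ᵥ (Q i *ᵥ fun j => v ⟨i, j⟩)) := by
            field_simp
    have hsumall := Finset.sum_nonneg (fun i (_ : i ∈ Finset.univ) => key i)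
    rw [Finset.sum_add_distrib, Finset.sum_add_distrib, ← Finset.sum_mul,
      ← Finset.mul_sum] at hsumall
    rw [hdv]
    rw [hsum] at hsumall
    nlinarith [hsumall]
end
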